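/- Let c ∈ ℝ^m be a circuit vector with support C = {i : c_i ≠ 0}, and let a, b ∈ ℝ^m satisfy ⟨c,a⟩ < 0 and ⟨c,b⟩ ≥ 0. Then there exists x ∈ ℝ^n such that sign(⟨u_i,x⟩ − a_i) = sign(c_i) for every i ∈ C, and there exists no x ∈ ℝ^n such that sign(⟨u_i,x⟩ − b_i) = sign(c_i) for every i ∈ C. -/

import Mathlib

open RealInnerProductSpace

noncomputable section

/-- `ℝ^n` with the Euclidean inner product. -/
abbrev Euc (n : ℕ) := EuclideanSpace ℝ (Fin n)

/-- Standard scalar product on `ℝ^m` (as tuples). -/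
def dotm {m : ℕ} (c a : Fin m → ℝ) : ℝ := ∑ i, c i * a i

/-- `C` is a circuit: the family `{u i : i ∈ C}` is linearly dependent but every proper
subfamily is linearly independent. -/
def IsCircuit {n m : ℕ} (u : Fin m → Euc n) (C : Set (Fin m)) : Prop :=
  ¬ LinearIndependent ℝ (fun i : C => u i) ∧
    ∀ D : Set (Fin m), D ⊂ C → LinearIndependent ℝ (fun i : D => u i)

/-- `c` is a circuit vector: `∑ i, c i • u i = 0` and the support of `c` is a circuit. -/
def IsCircuitVector {n m : ℕ} (u : Fin m → Euc n) (c : Fin m → ℝ) : Prop :=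
  (∑ i, c i • u i) = 0 ∧ IsCircuit u {i | c i ≠ 0}

/-- `a` and `b` lie in the same open face of the derived arrangement `δA_o`:
for every circuit vector `c`, `⟨c,a⟩` and `⟨c,b⟩` have the same sign. -/
def SameOpenFace {n m : ℕ} (u : Fin m → Euc n) (a b : Fin m → ℝ) : Prop :=
  ∀ c : Fin m → ℝ, IsCircuitVector u c →
    SignType.sign (dotm c a) = SignType.sign (dotm c b)

/-- `I, J, K` is a partition of `{1,…,m}` into pairwise disjoint (possibly empty) sets. -/
def IsTripartition {m : ℕ} (I J K : Set (Fin m)) : Prop :=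
  I ∪ J ∪ K = Set.univ ∧ Disjoint I J ∧ Disjoint I K ∧ Disjoint J K

/-- The convex polyhedron `P(a,I,J,K)`. -/
def poly {n m : ℕ} (u : Fin m → Euc n) (a : Fin m → ℝ) (I J K : Set (Fin m)) :
    Set (Euc n) :=
  {x | (∀ i ∈ I, ⟪u i, x⟫ = a i) ∧ (∀ j ∈ J, ⟪u j, x⟫ ≤ a j) ∧ (∀ k ∈ K, a k ≤ ⟪u k, x⟫)}

/-- The normal cone of `P` at `x`. -/
def normalCone {n : ℕ} (P : Set (Euc n)) (x : Euc n) : Set (Euc n) :=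
  {v | ∀ y ∈ P, ⟪v, y⟫ ≤ ⟪v, x⟫}

/-- The normal fan of `P`: the family of normal cones at points of `P`. -/
def normalFan {n : ℕ} (P : Set (Euc n)) : Set (Set (Euc n)) :=
  {N | ∃ x ∈ P, N = normalCone P x}

/-- A face of a convex polyhedron: the empty set or an exposed face. -/
def IsFace {n : ℕ} (P F : Set (Euc n)) : Prop :=
  F = ∅ ∨ ∃ v : Euc n, F = {x ∈ P | ∀ y ∈ P, ⟪v, y⟫ ≤ ⟪v, x⟫}

/-- The set of sign vectors of the parallel translation `A_a`. -/
def signSet {n m : ℕ} (u : Fin m → Euc n) (a : Fin m → ℝ) : Set (Fin m → SignType) :=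
  {s | ∃ x : Euc n, ∀ i, s i = SignType.sign (⟪u i, x⟫ - a i)}

lemma exists_inner_eq {n : ℕ} {ι : Type} [Fintype ι] (v : ι → Euc n)
    (hv : LinearIndependent ℝ v) (f : ι → ℝ) : ∃ x : Euc n, ∀ i, ⟪v i, x⟫ = f i := by
  classical
  let A : EuclideanSpace ℝ ι →ₗ[ℝ] Euc n :=
    ∑ i, LinearMap.smulRight ((EuclideanSpace.proj i : EuclideanSpace ℝ ι →L[ℝ] ℝ) : (EuclideanSpace ℝ ι) →ₗ[ℝ] ℝ) (v i)
  have hA : ∀ g : EuclideanSpace ℝ ι, A g = ∑ i, g i • v i := by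
    intro g
    simp only [A, LinearMap.sum_apply, LinearMap.smulRight_apply, LinearMap.proj_apply]
    rfl
  have hAinj : ∀ g : EuclideanSpace ℝ ι, A g = 0 → g = 0 := by
    intro g hg
    have := Fintype.linearIndependent_iff.mp hv g (by rw [← hA]; exact hg)
    ext i; exact this i
  let B : Euc n →ₗ[ℝ] EuclideanSpace ℝ ι := LinearMap.adjoint A
  have hrange : (LinearMap.range B)ᗮ = ⊥ := by
    rw [Submodule.eq_bot_iff]
    intro g hg
    rw [Submodule.mem_orthogonal'] at hg
    have h1 : ⟪g, B (A g)⟫ = 0 := hg (B (A g)) (LinearMap.mem_range_self _ _)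
    have h2 : ⟪A g, A g⟫ = 0 := by
      rwa [LinearMap.adjoint_inner_right] at h1
    exact hAinj g (inner_self_eq_zero.mp h2)
  have hsurj : LinearMap.range B = ⊤ := Submodule.orthogonal_eq_bot_iff.mp hrange
  obtain ⟨x, hx⟩ := (LinearMap.range_eq_top.mp hsurj) (WithLp.toLp 2 f : EuclideanSpace ℝ ι)
  refine ⟨x, fun i => ?_⟩
  have h2 : A (EuclideanSpace.single i 1) = v i := by
    rw [hA]
    simp [EuclideanSpace.single_apply, Finset.sum_ite_eq']
  calc ⟪v i, x⟫ = ⟪x, A (EuclideanSpace.single i 1)⟫ := by rw [h2, real_inner_comm]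
    _ = ⟪B x, EuclideanSpace.single i 1⟫ := by rw [LinearMap.adjoint_inner_left]
    _ = (B x) i := by
        rw [real_inner_comm]
        simp [EuclideanSpace.inner_single_left]
    _ = f i := by rw [hx]

theorem separate_cells {n m : ℕ} (hn : 1 ≤ n) (hm : 1 ≤ m)
    (u : Fin m → Euc n) (hu : ∀ i, u i ≠ 0)
    (c : Fin m → ℝ) (hc : IsCircuitVector u c)
    (a b : Fin m → ℝ) (ha : dotm c a < 0) (hb : 0 ≤ dotm c b) :
    (∃ x : Euc n, ∀ i, c i ≠ 0 →
        SignType.sign (⟪u i, x⟫ - a i) = SignType.sign (c i)) ∧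
      ¬ ∃ x : Euc n, ∀ i, c i ≠ 0 →
          SignType.sign (⟪u i, x⟫ - b i) = SignType.sign (c i) := by
  classical
  -- support nonempty
  obtain ⟨j, hj⟩ : ∃ j, c j ≠ 0 := by
    by_contra h
    push_neg at h
    have : IsEmpty ↥{i : Fin m | c i ≠ 0} := ⟨fun ⟨i, hi⟩ => hi (h i)⟩
    exact hc.2.1 linearIndependent_empty_type
  -- key: for any x, ∑ i, c i * ⟪u i, x⟫ = 0
  have hzero : ∀ x : Euc n, ∑ i, c i * ⟪u i, x⟫ = 0 := by
    intro x
    have h1 : (⟪∑ i, c i • u i, x⟫ : ℝ) = 0 := by rw [hc.1, inner_zero_left]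
    rw [sum_inner] at h1
    simpa only [real_inner_smul_left] using h1
  have hS : 0 < ∑ i, c i ^ 2 := by
    have h1 : (c j) ^ 2 ≤ ∑ i, c i ^ 2 :=
      Finset.single_le_sum (f := fun i => c i ^ 2) (fun i _ => sq_nonneg _) (Finset.mem_univ j)
    have h2 : 0 < (c j) ^ 2 := lt_of_le_of_ne (sq_nonneg _) (Ne.symm (pow_ne_zero 2 hj))
    linarith
  constructor
  · -- existence for a
    set lam : ℝ := (-(dotm c a)) / (∑ i, c i ^ 2) with hlamdef
    have hlam : 0 < lam := div_pos (neg_pos.mpr ha) hS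
    set D : Set (Fin m) := {i | c i ≠ 0 ∧ i ≠ j} with hDdef
    have hD : D ⊂ {i | c i ≠ 0} := by
      constructor
      · intro i hi; exact hi.1
      · intro hsub
        exact (hsub (show j ∈ {i : Fin m | c i ≠ 0} from hj)).2 rfl
    have hind := hc.2.2 D hD
    haveI : Fintype ↥D := Fintype.ofFinite _
    obtain ⟨x, hx⟩ := exists_inner_eq (fun i : ↥D => u i) hind (fun i => a i + lam * c i)
    have hkey : ∀ i, c i ≠ 0 → ⟪u i, x⟫ = a i + lam * c i := by
      intro i hi
      by_cases hij : i = j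
      · subst hij
        have h0 := hzero x
        have hone : ∑ k, (c k * ⟪u k, x⟫ - c k * (a k + lam * c k))
            = c i * ⟪u i, x⟫ - c i * (a i + lam * c i) := by
          apply Finset.sum_eq_single_of_mem i (Finset.mem_univ i)
          intro k _ hk
          by_cases hck : c k = 0
          · simp [hck]
          · rw [hx ⟨k, hck, hk⟩]; ring
        rw [Finset.sum_sub_distrib, h0] at hone
        have hA0 : ∑ k, c k * (a k + lam * c k) = 0 := by
          have heq : ∑ k, c k * (a k + lam * c k) = dotm c a + lam * ∑ k, c k ^ 2 := by
            rw [dotm, Finset.mul_sum, ← Finset.sum_add_distrib]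
            exact Finset.sum_congr rfl (fun k _ => by ring)
          rw [heq, hlamdef, div_mul_cancel₀ _ (ne_of_gt hS)]
          ring
        have hmul : c i * (⟪u i, x⟫ - (a i + lam * c i)) = 0 := by
          have : c i * ⟪u i, x⟫ - c i * (a i + lam * c i) = 0 := by
            rw [hA0] at hone; linarith
          linarith [this]
        rcases mul_eq_zero.mp hmul with h | h
        · exact absurd h hi
        · linarith [h]
      · exact hx ⟨i, hi, hij⟩
    refine ⟨x, fun i hi => ?_⟩
    have : ⟪u i, x⟫ - a i = lam * c i := by rw [hkey i hi]; ring
    rw [this, sign_mul, sign_pos hlam, one_mul]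
  · -- nonexistence for b
    rintro ⟨x, hx⟩
    have hpos : ∀ i, c i ≠ 0 → 0 < c i * (⟪u i, x⟫ - b i) := by
      intro i hi
      have hs := hx i hi
      rcases lt_trichotomy (c i) 0 with h | h | h
      · have : SignType.sign (⟪u i, x⟫ - b i) = -1 := by rw [hs]; exact sign_neg h
        have := sign_eq_neg_one_iff.mp this
        exact mul_pos_of_neg_of_neg h this
      · exact absurd h hi
      · have : SignType.sign (⟪u i, x⟫ - b i) = 1 := by rw [hs]; exact sign_pos h
        exact mul_pos h (sign_eq_one_iff.mp this)
    have hsum : 0 < ∑ i, c i * (⟪u i, x⟫ - b i) := by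
      apply Finset.sum_pos' (fun i _ => ?_) ⟨j, Finset.mem_univ j, hpos j hj⟩
      by_cases hi : c i = 0
      · simp [hi]
      · exact (hpos i hi).le
    have hexp : ∑ i, c i * (⟪u i, x⟫ - b i) = (∑ i, c i * ⟪u i, x⟫) - dotm c b := by
      rw [dotm, ← Finset.sum_sub_distrib]
      congr 1; funext i; ring
    rw [hexp, hzero x] at hsum
    linarith
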